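/- Suppose the elastic product ep with parameters α, β, ξ=0 is bilinear with respect to (⊕, ⊗) on U*. Then necessarily α = 1 and β = −1; i.e., (α,β)=(1,−1) is the unique pair of constants for which the recursive elastic product can be linear in its arguments. -/

import Mathlib

noncomputable section

/-- A discrete time series is represented as a list of (timestamp, value) pairs,
stored in strictly *decreasing* timestamp order (head = last sample).
`IsTS` says timestamps strictly decrease along the list and no spatial value is zero,
i.e. the list represents an element of `U*` (the empty list being `Ω`). -/
def IsTS {S : Type*} [Zero S] (l : List (ℝ × S)) : Prop :=
  l.Chain' (fun x y => y.1 < x.1) ∧ ∀ p ∈ l, p.2 ≠ (0 : S)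

/-- The recursive elastic product with parameters `α β ξ` and functions `f`, `g`:
`ep(A₁ᵖ,B₁ᵠ) = α·ep(A₁ᵖ⁻¹,B₁ᵠ) + β·ep(A₁ᵖ⁻¹,B₁ᵠ⁻¹) + f(a(p),b(q))·g(t_{a(p)},t_{b(q)}) + α·ep(A₁ᵖ,B₁ᵠ⁻¹)`
with base case `ep(A,Ω) = ep(Ω,B) = ξ`. -/
def ep {S : Type*} (f : S → S → ℝ) (g : ℝ → ℝ → ℝ) (α β ξ : ℝ) :
    List (ℝ × S) → List (ℝ × S) → ℝ
  | [], _ => ξ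
  | _ :: _, [] => ξ
  | (t, a) :: A, (u, b) :: B =>
      α * ep f g α β ξ A ((u, b) :: B) + β * ep f g α β ξ A B
        + f a b * g t u + α * ep f g α β ξ ((t, a) :: A) B
  termination_by A B => A.length + B.length


open Classical in
/-- The timestamp-merging addition `⊕`: merge the two series by timestamps, adding the
spatial values at coinciding timestamps and deleting resulting zero values. -/
def tsAdd {S : Type*} [AddCommGroup S] :
    List (ℝ × S) → List (ℝ × S) → List (ℝ × S)
  | [], l => l
  | l, [] => l
  | (t, a) :: A, (u, b) :: B =>
      if u < t then (t, a) :: tsAdd A ((u, b) :: B)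
      else if t < u then (u, b) :: tsAdd ((t, a) :: A) B
      else if a + b = 0 then tsAdd A B
      else (t, a + b) :: tsAdd A B
  termination_by A B => A.length + B.length


open Classical in
/-- Scalar multiplication `⊗`: scale every spatial value, deleting everything if `λ = 0`. -/
def tsSmul {S : Type*} [AddCommGroup S] [Module ℝ S] (r : ℝ) (l : List (ℝ × S)) :
    List (ℝ × S) :=
  if r = 0 then [] else l.map fun p => (p.1, r • p.2)

/-- `ip` is an inner product on `(U*, ⊕, ⊗)`: symmetric, bilinear
(linearity in the first argument together with symmetry), and positive definite. -/
structure IsInnerOnTS {S : Type*} [AddCommGroup S] [Module ℝ S]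
    (ip : List (ℝ × S) → List (ℝ × S) → ℝ) : Prop where
  symm : ∀ A B, IsTS A → IsTS B → ip A B = ip B A
  add_left : ∀ A B C, IsTS A → IsTS B → IsTS C → ip (tsAdd A B) C = ip A C + ip B C
  smul_left : ∀ (r : ℝ) A B, IsTS A → IsTS B → ip (tsSmul r A) B = r * ip A B
  nonneg : ∀ A, IsTS A → 0 ≤ ip A A
  definite : ∀ A, IsTS A → (ip A A = 0 ↔ A = [])


/-- if the elastic product with `ξ = 0` is bilinear with respect to `(⊕, ⊗)`
(`f` being an inner product on `S` and `g` strictly positive and symmetric), then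
necessarily `α = 1` and `β = -1`. -/
theorem ep_bilinear_implies_alpha_one_beta_neg_one
    {S : Type*} [AddCommGroup S] [Module ℝ S] (hS : ∃ s : S, s ≠ 0)
    (f : S → S → ℝ) (g : ℝ → ℝ → ℝ)
    (hg : ∀ t u, 0 < g t u) (hg_symm : ∀ t u, g t u = g u t)
    (hf_symm : ∀ a b, f a b = f b a)
    (hf_add : ∀ a b c, f (a + b) c = f a c + f b c)
    (hf_smul : ∀ (r : ℝ) (a b : S), f (r • a) b = r * f a b)
    (hf_pos : ∀ a : S, a ≠ 0 → 0 < f a a)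
    (α β : ℝ)
    (hadd_left : ∀ A B C, IsTS A → IsTS B → IsTS C →
      ep f g α β 0 (tsAdd A B) C = ep f g α β 0 A C + ep f g α β 0 B C)
    (hsmul_left : ∀ (r : ℝ) A B, IsTS A → IsTS B →
      ep f g α β 0 (tsSmul r A) B = r * ep f g α β 0 A B)
    (hadd_right : ∀ A B C, IsTS A → IsTS B → IsTS C →
      ep f g α β 0 A (tsAdd B C) = ep f g α β 0 A B + ep f g α β 0 A C)
    (hsmul_right : ∀ (r : ℝ) A B, IsTS A → IsTS B →
      ep f g α β 0 A (tsSmul r B) = r * ep f g α β 0 A B) :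
    α = 1 ∧ β = -1 := by
  obtain ⟨s, hs⟩ := hS
  set F := f s s with hF
  have hFpos : 0 < F := hf_pos s hs
  have hA : IsTS [((1:ℝ), s)] := ⟨List.isChain_singleton _, by simp [hs]⟩
  have hB : IsTS [((0:ℝ), s)] := ⟨List.isChain_singleton _, by simp [hs]⟩
  have hC : IsTS [((1:ℝ), s), ((0:ℝ), s)] := by
    constructor
    · exact List.isChain_pair.mpr (by norm_num)
    · intro p hp; simp only [List.mem_cons, List.mem_singleton] at hp
      rcases hp with h | h | h <;> simp_all
  have hmerge : tsAdd [((1:ℝ), s)] [((0:ℝ), s)] = [((1:ℝ), s), ((0:ℝ), s)] := by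
    norm_num [tsAdd]
  have h1 := hadd_left [((1:ℝ), s)] [((0:ℝ), s)] [((0:ℝ), s)] hA hB hB
  rw [hmerge] at h1
  simp only [ep] at h1
  -- h1 gives α = 1
  have hα : α = 1 := by
    have := h1
    ring_nf at this
    -- extract: α * (F * g 0 0) = F * g 0 0 essentially
    nlinarith [hg (0:ℝ) (0:ℝ), hFpos, mul_pos hFpos (hg (0:ℝ) (0:ℝ)), sq_nonneg (α - 1)]
  subst hα
  refine ⟨rfl, ?_⟩
  have h2 := hadd_left [((1:ℝ), s)] [((0:ℝ), s)] [((1:ℝ), s), ((0:ℝ), s)] hA hB hC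
  rw [hmerge] at h2
  simp only [ep] at h2
  have := mul_pos hFpos (hg (0:ℝ) (0:ℝ))
  nlinarith [this]

end
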